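/- Let U = λ₁ v₁⊗v₁ + v₂⊗v₂ + λ₃ v₃⊗v₃, where v₁, v₂, v₃ ∈ ℝ³ are orthonormal and 0 < λ₁ < 1 < λ₃. Let ê be a unit vector with ê · v₂ ≠ 0, set Û = (−I + 2 ê⊗ê) U (−I + 2 ê⊗ê), and assume Û ≠ U. Define the Type I vectors n_I = ê and a_I = 2 (U⁻¹ê/|U⁻¹ê|² − U ê). Then the following three conditions are equivalent: (i) (a_I · v₂)(n_I · v₂) = 0; (ii) a_I · v₂ = 0; (iii) |U⁻¹ê| = 1. -/
import Mathlib

open Matrix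

lemma vmv_mulVec (a b c : Fin 3 → ℝ) :
    (vecMulVec a b).mulVec c = (b ⬝ᵥ c) • a := by
  ext i
  simp [mulVec, dotProduct, vecMulVec_apply, Finset.sum_mul]
  apply Finset.sum_congr rfl
  intro x _
  ring

lemma vmv_mul (a b c d : Fin 3 → ℝ) :
    vecMulVec a b * vecMulVec c d = (b ⬝ᵥ c) • vecMulVec a d := by
  ext i j
  simp [mul_apply, vecMulVec_apply, dotProduct, Finset.sum_mul, Finset.mul_sum]
  apply Finset.sum_congr rfl
  intro x _
  ring

lemma vmv_transpose (a b : Fin 3 → ℝ) : (vecMulVec a b)ᵀ = vecMulVec b a := by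
  ext i j; simp [vecMulVec_apply, mul_comm]

/-- The 180° rotation matrix `-I + 2 ê⊗ê` for a unit vector `ê`. -/
noncomputable def reflMat (e : Fin 3 → ℝ) : Matrix (Fin 3) (Fin 3) ℝ :=
  -1 + (2 : ℝ) • Matrix.vecMulVec e e

theorem stmt_6 (U : Matrix (Fin 3) (Fin 3) ℝ) (v1 v2 v3 e : Fin 3 → ℝ) (l1 l3 : ℝ)
    (hl1 : 0 < l1) (hl1' : l1 < 1) (hl3 : 1 < l3)
    (hv1 : v1 ⬝ᵥ v1 = 1) (hv2 : v2 ⬝ᵥ v2 = 1) (hv3 : v3 ⬝ᵥ v3 = 1)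
    (h12 : v1 ⬝ᵥ v2 = 0) (h13 : v1 ⬝ᵥ v3 = 0) (h23 : v2 ⬝ᵥ v3 = 0)
    (hU : U = l1 • Matrix.vecMulVec v1 v1 + Matrix.vecMulVec v2 v2
        + l3 • Matrix.vecMulVec v3 v3)
    (he : e ⬝ᵥ e = 1) (hev2 : e ⬝ᵥ v2 ≠ 0)
    (hne : reflMat e * U * reflMat e ≠ U)
    (nI aI : Fin 3 → ℝ) (hnI : nI = e)
    (haI : aI = (2 : ℝ) • ((U⁻¹.mulVec e ⬝ᵥ U⁻¹.mulVec e)⁻¹ • U⁻¹.mulVec e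
        - U.mulVec e)) :
    ((aI ⬝ᵥ v2) * (nI ⬝ᵥ v2) = 0 ↔ aI ⬝ᵥ v2 = 0) ∧
    (aI ⬝ᵥ v2 = 0 ↔ Real.sqrt (U⁻¹.mulVec e ⬝ᵥ U⁻¹.mulVec e) = 1) := by
  have h21 : v2 ⬝ᵥ v1 = 0 := by rwa [dotProduct_comm]
  have h31 : v3 ⬝ᵥ v1 = 0 := by rwa [dotProduct_comm]
  have h32 : v3 ⬝ᵥ v2 = 0 := by rwa [dotProduct_comm]
  -- completeness: v1⊗v1 + v2⊗v2 + v3⊗v3 = 1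
  set M : Matrix (Fin 3) (Fin 3) ℝ := Matrix.of ![v1, v2, v3] with hM
  have d11 : v1 0 * v1 0 + v1 1 * v1 1 + v1 2 * v1 2 = 1 := by
    simpa [dotProduct, Fin.sum_univ_three] using hv1
  have d22 : v2 0 * v2 0 + v2 1 * v2 1 + v2 2 * v2 2 = 1 := by
    simpa [dotProduct, Fin.sum_univ_three] using hv2
  have d33 : v3 0 * v3 0 + v3 1 * v3 1 + v3 2 * v3 2 = 1 := by
    simpa [dotProduct, Fin.sum_univ_three] using hv3
  have d12 : v1 0 * v2 0 + v1 1 * v2 1 + v1 2 * v2 2 = 0 := by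
    simpa [dotProduct, Fin.sum_univ_three] using h12
  have d13 : v1 0 * v3 0 + v1 1 * v3 1 + v1 2 * v3 2 = 0 := by
    simpa [dotProduct, Fin.sum_univ_three] using h13
  have d23 : v2 0 * v3 0 + v2 1 * v3 1 + v2 2 * v3 2 = 0 := by
    simpa [dotProduct, Fin.sum_univ_three] using h23
  have hMMT : M * Mᵀ = 1 := by
    ext i j
    rw [mul_apply]
    fin_cases i <;> fin_cases j <;>
      simp [hM, transpose_apply, Fin.sum_univ_three, Matrix.one_apply] <;> linarith [d11, d22, d33, d12, d13, d23]
  have hMTM : Mᵀ * M = 1 := mul_eq_one_comm.mp hMMT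
  have hP : vecMulVec v1 v1 + vecMulVec v2 v2 + vecMulVec v3 v3 = 1 := by
    rw [← hMTM]
    ext i j
    rw [mul_apply]
    simp [hM, transpose_apply, vecMulVec_apply, Fin.sum_univ_three, mul_comm]
  -- explicit inverse
  set V : Matrix (Fin 3) (Fin 3) ℝ :=
    l1⁻¹ • vecMulVec v1 v1 + vecMulVec v2 v2 + l3⁻¹ • vecMulVec v3 v3 with hV
  have hl1ne : l1 ≠ 0 := ne_of_gt hl1
  have hl3ne : l3 ≠ 0 := by positivity
  have hUV : U * V = 1 := by
    rw [hU, hV, ← hP]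
    simp only [add_mul, mul_add, smul_mul_assoc, mul_smul_comm, vmv_mul,
      hv1, hv2, hv3, h12, h13, h23, h21, h31, h32, one_smul, zero_smul,
      smul_zero, add_zero, zero_add, smul_smul]
    rw [inv_mul_cancel₀ hl1ne, inv_mul_cancel₀ hl3ne]
    simp
  have hUinv : U⁻¹ = V := Matrix.inv_eq_right_inv hUV
  -- U v2 = v2, V v2 = v2
  have hUv2 : U.mulVec v2 = v2 := by
    rw [hU]
    simp [Matrix.add_mulVec, Matrix.smul_mulVec, vmv_mulVec, h12, hv2, h32]
  have hVv2 : V.mulVec v2 = v2 := by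
    rw [hV]
    simp [Matrix.add_mulVec, Matrix.smul_mulVec, vmv_mulVec, h12, hv2, h32]
  -- symmetry
  have hUT : Uᵀ = U := by rw [hU]; simp [transpose_add, transpose_smul, vmv_transpose]
  have hVT : Vᵀ = V := by rw [hV]; simp [transpose_add, transpose_smul, vmv_transpose]
  have key : ∀ (A : Matrix (Fin 3) (Fin 3) ℝ), Aᵀ = A → A.mulVec v2 = v2 →
      A.mulVec e ⬝ᵥ v2 = e ⬝ᵥ v2 := by
    intro A hAT hAv2
    rw [dotProduct_comm, Matrix.dotProduct_mulVec, ← Matrix.mulVec_transpose, hAT, hAv2,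
      dotProduct_comm]
  have hw2 : U⁻¹.mulVec e ⬝ᵥ v2 = e ⬝ᵥ v2 := by rw [hUinv]; exact key V hVT hVv2
  have hUe2 : U.mulVec e ⬝ᵥ v2 = e ⬝ᵥ v2 := key U hUT hUv2
  -- positivity of q
  set q : ℝ := U⁻¹.mulVec e ⬝ᵥ U⁻¹.mulVec e with hq
  have hwne : U⁻¹.mulVec e ≠ 0 := by
    intro h0
    have : U.mulVec (U⁻¹.mulVec e) = e := by
      rw [Matrix.mulVec_mulVec, hUinv, hUV, Matrix.one_mulVec]
    rw [h0, Matrix.mulVec_zero] at this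
    rw [← this] at he
    simpa using he
  have hqpos : 0 < q := by
    have h0 : 0 ≤ q := by
      rw [hq]
      simp only [dotProduct]
      exact Finset.sum_nonneg fun i _ => mul_self_nonneg _
    rcases lt_or_eq_of_le h0 with h | h
    · exact h
    · exact absurd (dotProduct_self_eq_zero.mp h.symm) hwne
  -- compute aI ⬝ᵥ v2
  have haI2 : aI ⬝ᵥ v2 = 2 * ((e ⬝ᵥ v2) * (q⁻¹ - 1)) := by
    rw [haI]
    simp only [smul_dotProduct, sub_dotProduct, ← hq, hw2, hUe2, smul_eq_mul]
    ring
  constructor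
  · constructor
    · intro h
      rcases mul_eq_zero.mp h with h | h
      · exact h
      · rw [hnI] at h; exact absurd h hev2
    · intro h; rw [h, zero_mul]
  · rw [haI2, Real.sqrt_eq_one]
    constructor
    · intro h
      have : q⁻¹ - 1 = 0 := by
        rcases mul_eq_zero.mp h with h | h
        · norm_num at h
        · rcases mul_eq_zero.mp h with h | h
          · exact absurd h hev2
          · exact h
      have : q⁻¹ = 1 := by linarith
      have := congrArg (·⁻¹) this
      simpa [inv_inv] using this
    · intro h; rw [h]; norm_num
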